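/- For λ ∈ (0,1), there does not exist a nontrivial real function u ∈ C²[0,1] satisfying u'' + (2/ρ - 2λρ/(1-ρ²))u' - (2cos(2f₀)/(ρ²(1-ρ²)) + λ(1+λ)/(1-ρ²))u = 0 on (0,1), where f₀(ρ) = 2·arctan(ρ). -/

import Mathlib

open Real Set Filter Topology

noncomputable def f₀ : ℝ → ℝ := fun ρ => 2 * Real.arctan ρ

namespace ModeStab

noncomputable def Gf (x : ℝ) : ℝ := 2*x/(1+x^2)
noncomputable def Gpf (x : ℝ) : ℝ := 2*(1-x^2)/(1+x^2)^2
noncomputable def wf (l x : ℝ) : ℝ := (1-x^2) ^ l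
noncomputable def sfn (l : ℝ) (u : ℝ → ℝ) (x : ℝ) : ℝ :=
  x^2 * wf l x * (Gf x * deriv u x - Gpf x * u x)
noncomputable def Af (l x : ℝ) : ℝ :=
  (5-(4+2*l)*x^2-(1+2*l)*x^4)/((1-l)*(4+l+l*x^2))
noncomputable def Apf (l x : ℝ) : ℝ :=
  2*x*((-(4+2*l)-2*(1+2*l)*x^2)*(4+l+l*x^2) - l*(5-(4+2*l)*x^2-(1+2*l)*x^4))
    /((1-l)*(4+l+l*x^2)^2)
noncomputable def cf (l x : ℝ) : ℝ :=
  (1-l)*x^2*(4*x^2/(1+x^2)^2)*(4+l+l*x^2)/((1+x^2)*(1-x^2)) * wf l x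
noncomputable def Df (l : ℝ) (u : ℝ → ℝ) (x : ℝ) : ℝ :=
  -(u x * (x^3 * wf l x * Gf x)) - Af l x * sfn l u x

lemma cos4 (x : ℝ) : Real.cos (2 * f₀ x) = (1-6*x^2+x^4)/(1+x^2)^2 := by
  have h3 : Real.cos (Real.arctan x) = 1 / Real.sqrt (1+x^2) := Real.cos_arctan x
  have h4 : Real.sqrt (1+x^2)^2 = 1+x^2 := Real.sq_sqrt (by positivity)
  have h5 : (1:ℝ)+x^2 ≠ 0 := by positivity
  show Real.cos (2 * (2 * Real.arctan x)) = _
  rw [Real.cos_two_mul, Real.cos_two_mul, h3, div_pow, one_pow, h4]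
  field_simp
  ring

lemma h1mx {x : ℝ} (hx0 : 0 < x) (hx1 : x < 1) : (0:ℝ) < 1 - x^2 := by nlinarith

lemma hwpos {l x : ℝ} (hx0 : 0 < x) (hx1 : x < 1) : 0 < wf l x :=
  Real.rpow_pos_of_pos (h1mx hx0 hx1) l

lemma hGpos {x : ℝ} (hx0 : 0 < x) : 0 < Gf x := by unfold Gf; positivity

lemma hcpos {l x : ℝ} (hl0 : 0 < l) (hl1 : l < 1) (hx0 : 0 < x) (hx1 : x < 1) : 0 < cf l x := by
  unfold cf
  have h1 := h1mx hx0 hx1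
  have h2 := hwpos (l := l) hx0 hx1
  have h3 : (0:ℝ) < 4+l+l*x^2 := by nlinarith
  have h4 : (0:ℝ) < 1-l := by linarith
  positivity

lemma hw_deriv {l x : ℝ} (hx0 : 0 < x) (hx1 : x < 1) :
    HasDerivAt (wf l) (l * (1-x^2)^(l-1) * (-(2*x))) x := by
  have hb : HasDerivAt (fun y : ℝ => 1 - y^2) (-(2*x)) x := by
    simpa using ((hasDerivAt_pow 2 x).const_sub 1)
  have := hb.rpow_const (p := l) (Or.inl (ne_of_gt (h1mx hx0 hx1)))
  exact this.congr_deriv (by ring)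

lemma hG_deriv {x : ℝ} (hx0 : 0 < x) : HasDerivAt Gf (Gpf x) x := by
  have h5 : (1:ℝ)+x^2 ≠ 0 := by positivity
  have h1 : HasDerivAt (fun y : ℝ => 2*y) 2 x := by simpa using (hasDerivAt_id x).const_mul 2
  have h2 : HasDerivAt (fun y : ℝ => 1+y^2) (2*x) x := by
    simpa using ((hasDerivAt_pow 2 x).const_add 1)
  have := h1.div h2 h5
  refine this.congr_deriv (Eq.symm ?_)
  unfold Gpf
  field_simp
  ring

lemma hGp_deriv {x : ℝ} (hx0 : 0 < x) : HasDerivAt Gpf (4*x*(x^2-3)/(1+x^2)^3) x := by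
  have h5 : ((1:ℝ)+x^2)^2 ≠ 0 := by positivity
  have h1 : HasDerivAt (fun y : ℝ => 2*(1-y^2)) (2*(-(2*x))) x := by
    simpa using (((hasDerivAt_pow 2 x).const_sub 1).const_mul 2)
  have h2 : HasDerivAt (fun y : ℝ => (1+y^2)^2) (2*(1+x^2)^1*(2*x)) x :=
    ((by simpa using ((hasDerivAt_pow 2 x).const_add 1) : HasDerivAt (fun y : ℝ => 1+y^2) (2*x) x).pow 2).congr_deriv (by norm_num)
  have := h1.div h2 h5
  refine this.congr_deriv (Eq.symm ?_)
  have h6 : (1:ℝ)+x^2 ≠ 0 := by positivity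
  field_simp
  ring

lemma hA_deriv {l x : ℝ} (hl0 : 0 < l) (hl1 : l < 1) (hx0 : 0 < x) (hx1 : x < 1) :
    HasDerivAt (Af l) (Apf l x) x := by
  have hd : ((1:ℝ)-l)*(4+l+l*x^2) ≠ 0 := by
    have h1 : (0:ℝ) < 1-l := by linarith
    have h2 : (0:ℝ) < 4+l+l*x^2 := by positivity
    positivity
  have p2 := hasDerivAt_pow 2 x
  have p4 := hasDerivAt_pow 4 x
  have h1 := ((p2.const_mul (4+2*l)).const_sub 5).sub (p4.const_mul (1+2*l))
  have h2 := ((p2.const_mul l).const_add (4+l)).const_mul (1-l)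
  have := h1.div h2 hd
  refine this.congr_deriv (Eq.symm ?_)
  unfold Apf
  have h3 : (0:ℝ) < 1-l := by linarith
  have h4 : (0:ℝ) < 4+l+l*x^2 := by positivity
  push_cast [Pi.sub_apply]
  field_simp
  ring

lemma hs_deriv {l x : ℝ} (hl0 : 0 < l) (hl1 : l < 1) (hx0 : 0 < x) (hx1 : x < 1)
    (u : ℝ → ℝ)
    (hu1 : HasDerivAt u (deriv u x) x)
    (hu2 : HasDerivAt (deriv u) (deriv (deriv u) x) x)
    (hode : deriv (deriv u) x + (2/x - 2*l*x/(1-x^2)) * deriv u x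
      - (2*Real.cos (2*f₀ x)/(x^2*(1-x^2)) + l*(1+l)/(1-x^2)) * u x = 0) :
    HasDerivAt (sfn l u) (-(cf l x * (u x / Gf x))) x := by
  show HasDerivAt (fun y : ℝ => y^2 * wf l y * (Gf y * deriv u y - Gpf y * u y)) _ x
  have hmx := h1mx hx0 hx1
  have hW := (hwpos (l := l) hx0 hx1).ne'
  have hpx : (0:ℝ) < 1 + x^2 := by positivity
  have h_a : HasDerivAt (fun y : ℝ => y^2 * wf l y)
      ((2*x)*wf l x + x^2*(l * (1-x^2)^(l-1) * (-(2*x)))) x := by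
    have := (hasDerivAt_pow 2 x).mul (hw_deriv (l := l) hx0 hx1)
    refine this.congr_deriv (Eq.symm ?_); push_cast; ring
  have h_b : HasDerivAt (fun y : ℝ => Gf y * deriv u y - Gpf y * u y)
      ((Gpf x * deriv u x + Gf x * deriv (deriv u) x)
        - (4*x*(x^2-3)/(1+x^2)^3 * u x + Gpf x * deriv u x)) x :=
    ((hG_deriv hx0).mul hu2).sub ((hGp_deriv hx0).mul hu1)
  have total := h_a.mul h_b
  have hupp : deriv (deriv u) x = (2*((1-6*x^2+x^4)/(1+x^2)^2)/(x^2*(1-x^2)) + l*(1+l)/(1-x^2))*u x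
      - (2/x - 2*l*x/(1-x^2))*deriv u x := by
    rw [cos4] at hode; linarith
  have hrw : (1-x^2)^(l-1) = wf l x / (1-x^2) := by
    rw [wf]; exact Real.rpow_sub_one hmx.ne' l
  rw [hupp, hrw] at total
  refine total.congr_deriv (Eq.symm ?_)
  show -(cf l x * (u x / Gf x)) = _
  rw [cf]
  simp only [Gf, Gpf]
  set W := wf l x
  field_simp
  ring

lemma hD_deriv {l x : ℝ} (hl0 : 0 < l) (hl1 : l < 1) (hx0 : 0 < x) (hx1 : x < 1)
    (u : ℝ → ℝ) (hu1 : HasDerivAt u (deriv u x) x)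
    (hu2 : HasDerivAt (deriv u) (deriv (deriv u) x) x)
    (hode : deriv (deriv u) x + (2/x - 2*l*x/(1-x^2)) * deriv u x
      - (2*Real.cos (2*f₀ x)/(x^2*(1-x^2)) + l*(1+l)/(1-x^2)) * u x = 0) :
    HasDerivAt (Df l u) (-(sfn l u x * (x + Apf l x))) x := by
  have hmx := h1mx hx0 hx1
  have hW := (hwpos (l := l) hx0 hx1).ne'
  have hpx : (0:ℝ) < 1 + x^2 := by positivity
  have hdl : (0:ℝ) < 1 - l := by linarith
  have hdn : (0:ℝ) < 4+l+l*x^2 := by positivity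
  have hE0 : HasDerivAt (fun y : ℝ => y^3*wf l y*Gf y)
      (((3:ℝ)*x^2*wf l x + x^3*(l * (1-x^2)^(l-1) * (-(2*x))))*Gf x + x^3*wf l x*Gpf x) x := by
    have h3 : HasDerivAt (fun y : ℝ => y^3) ((3:ℝ)*x^2) x := by
      simpa using hasDerivAt_pow 3 x
    exact ((h3.mul (hw_deriv (l := l) hx0 hx1)).mul (hG_deriv hx0)).congr_deriv (by simp only [Pi.mul_apply])
  have hE := hu1.mul hE0
  have hAs := (hA_deriv hl0 hl1 hx0 hx1).mul (hs_deriv hl0 hl1 hx0 hx1 u hu1 hu2 hode)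
  have total := (hE.neg).sub hAs
  have : Df l u = fun y => -(u y * (y^3*wf l y*Gf y)) - Af l y * sfn l u y := rfl
  rw [this]
  refine total.congr_deriv (Eq.symm ?_)
  have hrw : (1-x^2)^(l-1) = wf l x / (1-x^2) := by
    rw [wf]; exact Real.rpow_sub_one hmx.ne' l
  rw [hrw]
  simp only [sfn, Af, Apf, cf, Gf, Gpf]
  set W := wf l x
  field_simp
  ring

lemma Phi_neg {t l : ℝ} (ht0 : 0 ≤ t) (ht1 : t ≤ 1) (hl0 : 0 < l) (hl1 : l < 1) :
    (1-l)*(4+l+l*t)^2 + 2*((-(4+2*l)-2*(1+2*l)*t)*(4+l+l*t) - l*(5-(4+2*l)*t-(1+2*l)*t^2)) < 0 := by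
  nlinarith [sq_nonneg (t*l), sq_nonneg t, sq_nonneg l, sq_nonneg (1-l), sq_nonneg (1-t),
    mul_nonneg ht0 hl0.le, sq_nonneg (t-l), mul_nonneg (mul_nonneg ht0 ht0) hl0.le]

lemma hkey {l x : ℝ} (hl0 : 0 < l) (hl1 : l < 1) (hx0 : 0 < x) (hx1 : x < 1) :
    x + Apf l x < 0 := by
  have hdl : (0:ℝ) < 1 - l := by linarith
  have hdn : (0:ℝ) < 4+l+l*x^2 := by positivity
  have hPhi := Phi_neg (t := x^2) (by positivity) (by nlinarith) hl0 hl1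
  have heq : x + Apf l x =
      x*((1-l)*(4+l+l*x^2)^2 + 2*((-(4+2*l)-2*(1+2*l)*x^2)*(4+l+l*x^2)
        - l*(5-(4+2*l)*x^2-(1+2*l)*(x^2)^2)))/((1-l)*(4+l+l*x^2)^2) := by
    rw [Apf]; field_simp
  rw [heq]
  apply div_neg_of_neg_of_pos
  · exact mul_neg_of_pos_of_neg hx0 hPhi
  · positivity

section main
variable {l : ℝ} {u : ℝ → ℝ}
/-- Derivative facts for u at interior points. -/
lemma u_facts (hu : ContDiffOn ℝ 2 u (Icc 0 1)) {x : ℝ} (hx : x ∈ Ioo (0:ℝ) 1) :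
    HasDerivAt u (deriv u x) x ∧ HasDerivAt (deriv u) (deriv (deriv u) x) x := by
  have hio : ContDiffOn ℝ 2 u (Ioo 0 1) := hu.mono Ioo_subset_Icc_self
  have hnb : Ioo (0:ℝ) 1 ∈ nhds x := isOpen_Ioo.mem_nhds hx
  have hder : ContDiffOn ℝ 1 (deriv u) (Ioo 0 1) := hio.deriv_of_isOpen isOpen_Ioo (by norm_num)
  have hd2 : DifferentiableAt ℝ (deriv u) x :=
    ((hder.differentiableOn (by norm_num)).differentiableAt hnb)
  have hd1 : DifferentiableAt ℝ u x := (hio.differentiableOn (by norm_num)).differentiableAt hnb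
  exact ⟨hd1.hasDerivAt, hd2.hasDerivAt⟩

theorem no_pos (hl0 : 0 < l) (hl1 : l < 1)
    (hu : ContDiffOn ℝ 2 u (Icc 0 1))
    (hode : ∀ ρ ∈ Ioo (0:ℝ) 1,
      deriv (deriv u) ρ + (2 / ρ - 2 * l * ρ / (1 - ρ^2)) * deriv u ρ
        - (2 * Real.cos (2 * f₀ ρ) / (ρ^2 * (1 - ρ^2))
            + l * (1 + l) / (1 - ρ^2)) * u ρ = 0)
    {ρ₀ : ℝ} (hρ₀ : ρ₀ ∈ Ioo (0:ℝ) 1) (hsρ₀ : 0 < sfn l u ρ₀) : False := by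
  -- abbreviations
  set s := sfn l u with hs_def
  set D := Df l u with hD_def
  have hsD : ∀ x ∈ Ioo (0:ℝ) 1, HasDerivAt s (-(cf l x * (u x / Gf x))) x := by
    intro x hx
    obtain ⟨h1, h2⟩ := u_facts hu hx
    exact hs_deriv hl0 hl1 hx.1 hx.2 u h1 h2 (hode x hx)
  have hDD : ∀ x ∈ Ioo (0:ℝ) 1, HasDerivAt D (-(s x * (x + Apf l x))) x := by
    intro x hx
    obtain ⟨h1, h2⟩ := u_facts hu hx
    exact hD_deriv hl0 hl1 hx.1 hx.2 u h1 h2 (hode x hx)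
  have hscont : ∀ x ∈ Ioo (0:ℝ) 1, ContinuousAt s x := fun x hx => (hsD x hx).continuousAt

  -- limits of D at the endpoints
  have hu_cont : ContinuousOn u (Icc 0 1) := hu.continuousOn
  have hud : ContinuousOn (derivWithin u (Icc 0 1)) (Icc 0 1) :=
    hu.continuousOn_derivWithin (uniqueDiffOn_Icc one_pos) (by norm_num)
  have hder_congr : ∀ z : ℝ, (derivWithin u (Icc 0 1)) =ᶠ[𝓝[Ioo (0:ℝ) 1] z] (deriv u) := by
    intro z
    filter_upwards [self_mem_nhdsWithin] with y hy
    exact derivWithin_of_mem_nhds (Icc_mem_nhds hy.1 hy.2)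
  have hD_lim : ∀ z ∈ Icc (0:ℝ) 1, Filter.Tendsto (deriv u) (𝓝[Ioo (0:ℝ) 1] z)
      (𝓝 (derivWithin u (Icc 0 1) z)) := by
    intro z hz
    exact ((hud z hz).mono Ioo_subset_Icc_self).congr' (hder_congr z)
  have hu_lim : ∀ z ∈ Icc (0:ℝ) 1, Filter.Tendsto u (𝓝[Ioo (0:ℝ) 1] z) (𝓝 (u z)) :=
    fun z hz => (hu_cont z hz).mono Ioo_subset_Icc_self
  have hpoly : ∀ (n : ℕ) (z : ℝ), Filter.Tendsto (fun y : ℝ => y^n) (𝓝[Ioo (0:ℝ) 1] z) (𝓝 (z^n)) :=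
    fun n z => ((continuous_pow n).continuousAt).tendsto.mono_left nhdsWithin_le_nhds
  have hGf_lim : ∀ z : ℝ, Filter.Tendsto Gf (𝓝[Ioo (0:ℝ) 1] z) (𝓝 (Gf z)) := by
    intro z
    have : ContinuousAt Gf z := by
      apply ContinuousAt.div (by fun_prop) (by fun_prop)
      positivity
    exact this.tendsto.mono_left nhdsWithin_le_nhds
  have hGpf_lim : ∀ z : ℝ, Filter.Tendsto Gpf (𝓝[Ioo (0:ℝ) 1] z) (𝓝 (Gpf z)) := by
    intro z
    have : ContinuousAt Gpf z := by
      apply ContinuousAt.div (by fun_prop) (by fun_prop)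
      positivity
    exact this.tendsto.mono_left nhdsWithin_le_nhds
  have hAf_lim : ∀ z : ℝ, 0 ≤ z → Filter.Tendsto (Af l) (𝓝[Ioo (0:ℝ) 1] z) (𝓝 (Af l z)) := by
    intro z hz
    have : ContinuousAt (Af l) z := by
      apply ContinuousAt.div (by fun_prop) (by fun_prop)
      have h1 : (0:ℝ) < 1 - l := by linarith
      have h2 : (0:ℝ) < 4+l+l*z^2 := by positivity
      positivity
    exact this.tendsto.mono_left nhdsWithin_le_nhds
  have hwf0 : Filter.Tendsto (wf l) (𝓝[Ioo (0:ℝ) 1] 0) (𝓝 (wf l 0)) := by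
    have : ContinuousAt (wf l) 0 := by
      apply ContinuousAt.rpow_const (by fun_prop)
      norm_num
    exact this.tendsto.mono_left nhdsWithin_le_nhds
  have hwf1 : Filter.Tendsto (wf l) (𝓝[Ioo (0:ℝ) 1] 1) (𝓝 0) := by
    have hbase : Filter.Tendsto (fun y : ℝ => 1 - y^2) (𝓝[Ioo (0:ℝ) 1] 1) (𝓝 0) := by
      have hc : ContinuousAt (fun y : ℝ => 1 - y^2) 1 := by fun_prop
      have h : Filter.Tendsto (fun y : ℝ => 1 - y^2) (𝓝[Ioo (0:ℝ) 1] 1) (𝓝 (1 - (1:ℝ)^2)) :=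
        hc.tendsto.mono_left nhdsWithin_le_nhds
      simpa using h
    have hcomp := (Real.continuousAt_rpow_const 0 l (Or.inr hl0.le)).tendsto.comp hbase
    rw [Real.zero_rpow hl0.ne'] at hcomp
    exact hcomp
  have hD0 : Filter.Tendsto D (𝓝[Ioo (0:ℝ) 1] 0) (𝓝 0) := by
    have T := ((hu_lim 0 (by norm_num)).mul (((hpoly 3 0).mul hwf0).mul (hGf_lim 0))).neg.sub
      ((hAf_lim 0 le_rfl).mul (((hpoly 2 0).mul hwf0).mul
        (((hGf_lim 0).mul (hD_lim 0 (by norm_num))).sub ((hGpf_lim 0).mul (hu_lim 0 (by norm_num))))))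
    convert T using 1
    · rfl
    norm_num
  have hD1 : Filter.Tendsto D (𝓝[Ioo (0:ℝ) 1] 1) (𝓝 0) := by
    have T := ((hu_lim 1 (by norm_num)).mul (((hpoly 3 1).mul hwf1).mul (hGf_lim 1))).neg.sub
      ((hAf_lim 1 zero_le_one).mul (((hpoly 2 1).mul hwf1).mul
        (((hGf_lim 1).mul (hD_lim 1 (by norm_num))).sub ((hGpf_lim 1).mul (hu_lim 1 (by norm_num))))))
    convert T using 1
    · rfl
    norm_num
  haveI hNB0 : (𝓝[Ioo (0:ℝ) 1] (0:ℝ)).NeBot := by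
    apply mem_closure_iff_nhdsWithin_neBot.mp
    rw [closure_Ioo (by norm_num : (0:ℝ) ≠ 1)]
    exact ⟨le_rfl, zero_le_one⟩
  haveI hNB1 : (𝓝[Ioo (0:ℝ) 1] (1:ℝ)).NeBot := by
    apply mem_closure_iff_nhdsWithin_neBot.mp
    rw [closure_Ioo (by norm_num : (0:ℝ) ≠ 1)]
    exact ⟨zero_le_one, le_rfl⟩
  -- the sets and a, b
  set Bset : Set ℝ := {y : ℝ | y ∈ Icc ρ₀ 1 ∧ (y = 1 ∨ s y ≤ 0)} with hBset_def
  have hB1 : (1:ℝ) ∈ Bset := ⟨⟨hρ₀.2.le, le_rfl⟩, Or.inl rfl⟩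
  have hBbdd : BddBelow Bset := ⟨ρ₀, fun y hy => hy.1.1⟩
  set b := sInf Bset with hb_def
  have hblow : ∀ y ∈ Bset, b ≤ y := fun y hy => csInf_le hBbdd hy
  have hb1 : b ≤ 1 := hblow 1 hB1
  -- ρ₀ < b
  have hρ₀b : ρ₀ < b := by
    have hev : ∀ᶠ y in 𝓝 ρ₀, 0 < s y :=
      (hscont ρ₀ hρ₀).eventually_mem (isOpen_Ioi.mem_nhds hsρ₀)
    obtain ⟨ε, hε, hball⟩ := Metric.eventually_nhds_iff.mp hev
    have hδ : 0 < min ε (1 - ρ₀) := lt_min hε (by linarith [hρ₀.2])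
    have : ρ₀ + min ε (1-ρ₀) ≤ b := by
      apply le_csInf ⟨1, hB1⟩
      intro y hy
      by_contra hyc
      push_neg at hyc
      have hy1 : y < 1 := by
        have := min_le_right ε (1-ρ₀); linarith
      have hsy : 0 < s y := by
        apply hball
        rw [Real.dist_eq, abs_lt]
        constructor
        · have := hy.1.1; have := min_le_left ε (1-ρ₀); linarith
        · have := min_le_left ε (1-ρ₀); linarith
      rcases hy.2 with h | h
      · exact absurd h (ne_of_lt hy1)
      · linarith
    linarith
  have hspos_r : ∀ y, ρ₀ ≤ y → y < b → 0 < s y := by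
    intro y h1 h2
    by_contra hc
    push_neg at hc
    have : y ∈ Bset := ⟨⟨h1, by linarith⟩, Or.inr hc⟩
    exact absurd (hblow y this) (by linarith)
  -- left set
  set Aset : Set ℝ := {y : ℝ | y ∈ Icc 0 ρ₀ ∧ (y = 0 ∨ s y ≤ 0)} with hAset_def
  have hA0 : (0:ℝ) ∈ Aset := ⟨⟨le_rfl, hρ₀.1.le⟩, Or.inl rfl⟩
  have hAbdd : BddAbove Aset := ⟨ρ₀, fun y hy => hy.1.2⟩
  set a := sSup Aset with ha_def
  have hahigh : ∀ y ∈ Aset, y ≤ a := fun y hy => le_csSup hAbdd hy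
  have ha0 : 0 ≤ a := hahigh 0 hA0
  have haρ₀ : a < ρ₀ := by
    have hev : ∀ᶠ y in 𝓝 ρ₀, 0 < s y :=
      (hscont ρ₀ hρ₀).eventually_mem (isOpen_Ioi.mem_nhds hsρ₀)
    obtain ⟨ε, hε, hball⟩ := Metric.eventually_nhds_iff.mp hev
    have hδ : 0 < min ε ρ₀ := lt_min hε hρ₀.1
    have : a ≤ ρ₀ - min ε ρ₀ := by
      apply csSup_le ⟨0, hA0⟩
      intro y hy
      by_contra hyc
      push_neg at hyc
      have hy0 : 0 < y := by
        have := min_le_right ε ρ₀; linarith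
      have hsy : 0 < s y := by
        apply hball
        rw [Real.dist_eq, abs_lt]
        constructor
        · have := min_le_left ε ρ₀; linarith
        · have := hy.1.2; have := min_le_left ε ρ₀; linarith [hε]
      rcases hy.2 with h | h
      · exact absurd h (ne_of_gt hy0)
      · linarith
    linarith
  have hspos_l : ∀ y, a < y → y ≤ ρ₀ → 0 < s y := by
    intro y h1 h2
    by_contra hc
    push_neg at hc
    have hy0 : 0 < y := lt_of_le_of_lt ha0 h1
    have : y ∈ Aset := ⟨⟨hy0.le, h2⟩, Or.inr hc⟩
    exact absurd (hahigh y this) (by linarith)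
  have hs_ab : ∀ y ∈ Ioo a b, 0 < s y := by
    intro y hy
    rcases le_total y ρ₀ with h | h
    · exact hspos_l y hy.1 h
    · exact hspos_r y h hy.2
  have hab_sub : Ioo a b ⊆ Ioo (0:ℝ) 1 := fun y hy =>
    ⟨lt_of_le_of_lt ha0 hy.1, lt_of_lt_of_le hy.2 hb1⟩
  -- strict monotonicity of D on Ioo a b
  have hmono : StrictMonoOn D (Ioo a b) := by
    apply strictMonoOn_of_deriv_pos (convex_Ioo a b)
    · intro y hy
      exact ((hDD y (hab_sub hy)).continuousAt).continuousWithinAt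
    · intro y hy
      rw [interior_Ioo] at hy
      have hy' := hab_sub hy
      rw [(hDD y hy').deriv]
      have h1 := hs_ab y hy
      have h2 := hkey hl0 hl1 hy'.1 hy'.2
      nlinarith
  -- choose x₁ x₂
  set x₁ := a + (ρ₀ - a)/2 with hx₁_def
  set x₂ := ρ₀ + (b - ρ₀)/2 with hx₂_def
  have hx₁m : x₁ ∈ Ioo a b := ⟨by simp only [hx₁_def]; linarith, by simp only [hx₁_def]; linarith⟩
  have hx₂m : x₂ ∈ Ioo a b := ⟨by simp only [hx₂_def]; linarith, by simp only [hx₂_def]; linarith⟩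
  have hx₁x₂ : x₁ < x₂ := by simp only [hx₁_def, hx₂_def]; linarith
  have hlt : D x₁ < D x₂ := hmono hx₁m hx₂m hx₁x₂
  -- D x₁ ≥ 0
  have h₁ : 0 ≤ D x₁ := by
    rcases eq_or_lt_of_le ha0 with ha | ha
    · -- a = 0 : use limit of D at 0
      have hx₁0 : (0:ℝ) < x₁ := by rw [ha]; exact hx₁m.1
      apply le_of_tendsto hD0
      filter_upwards [self_mem_nhdsWithin,
        mem_nhdsWithin_of_mem_nhds (Iio_mem_nhds hx₁0)] with y hy1 hy2
      exact (hmono ⟨by rw [← ha]; exact hy1.1, lt_trans hy2 hx₁m.2⟩ hx₁m hy2).le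
    · -- a > 0
      have haI : a ∈ Ioo (0:ℝ) 1 := ⟨ha, lt_trans haρ₀ hρ₀.2⟩
      -- s a = 0
      have hsa_le : s a ≤ 0 := by
        by_contra hap
        push_neg at hap
        have hev : ∀ᶠ y in 𝓝 a, 0 < s y :=
          (hscont a haI).eventually_mem (isOpen_Ioi.mem_nhds hap)
        obtain ⟨ε, hε, hball⟩ := Metric.eventually_nhds_iff.mp hev
        have hδ : 0 < min ε a := lt_min hε ha
        have hcontr : a ≤ a - min ε a := by
          apply csSup_le ⟨0, hA0⟩
          intro y hy
          by_contra hyc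
          push_neg at hyc
          have hy0 : 0 < y := by
            have := min_le_right ε a; linarith
          have hya : y ≤ a := hahigh y hy
          have hsy : 0 < s y := by
            apply hball
            rw [Real.dist_eq, abs_lt]
            have := min_le_left ε a
            constructor <;> linarith
          rcases hy.2 with h | h
          · exact absurd h (ne_of_gt hy0)
          · linarith
        linarith
      have hsa_ge : 0 ≤ s a := by
        have htd : Filter.Tendsto s (𝓝[>] a) (𝓝 (s a)) :=
          Filter.Tendsto.mono_left (hscont a haI) nhdsWithin_le_nhds
        apply ge_of_tendsto htd
        filter_upwards [Ioo_mem_nhdsGT_of_mem (Set.mem_Ico.mpr ⟨le_rfl, haρ₀⟩)] with y hy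
        exact (hspos_l y hy.1 hy.2.le).le
      have hsa : s a = 0 := le_antisymm hsa_le hsa_ge
      -- s'(a) ≥ 0 hence u a ≤ 0
      have hsda := hsD a haI
      have hslope : 0 ≤ -(cf l a * (u a / Gf a)) := by
        have htd := (hasDerivAt_iff_tendsto_slope.mp hsda).mono_left
          (nhdsWithin_mono a (fun y (hy : y ∈ Ioi a) => ne_of_gt hy : Ioi a ⊆ {a}ᶜ))
        apply ge_of_tendsto htd
        filter_upwards [Ioo_mem_nhdsGT_of_mem (Set.mem_Ico.mpr ⟨le_rfl, haρ₀⟩)] with y hy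
        rw [slope_def_field, hsa]
        have h1 := hspos_l y hy.1 hy.2.le
        have h2 : 0 < y - a := by linarith [hy.1]
        rw [sub_zero]
        positivity
      have hua : u a ≤ 0 := by
        have hc := hcpos hl0 hl1 haI.1 haI.2
        have hg := hGpos haI.1
        by_contra hc2
        push_neg at hc2
        have : 0 < cf l a * (u a / Gf a) := by positivity
        linarith
      -- D a ≥ 0 and D a ≤ D x₁
      have hDa : 0 ≤ D a := by
        have hw := hwpos (l := l) haI.1 haI.2
        have hg := hGpos haI.1
        rw [hD_def]
        show 0 ≤ -(u a * (a^3 * wf l a * Gf a)) - Af l a * sfn l u a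
        rw [show sfn l u a = s a from rfl, hsa, mul_zero, sub_zero]
        have ha0' : (0:ℝ) < a := haI.1
        have : u a * (a^3 * wf l a * Gf a) ≤ 0 :=
          mul_nonpos_of_nonpos_of_nonneg hua
            (mul_nonneg (mul_nonneg (pow_nonneg ha0'.le 3) hw.le) hg.le)
        linarith
      have hDax₁ : D a ≤ D x₁ := by
        have htd : Filter.Tendsto D (𝓝[>] a) (𝓝 (D a)) :=
          Filter.Tendsto.mono_left ((hDD a haI).continuousAt) nhdsWithin_le_nhds
        apply le_of_tendsto htd
        filter_upwards [Ioo_mem_nhdsGT_of_mem (Set.mem_Ico.mpr ⟨le_rfl, hx₁m.1⟩)] with y hy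
        exact (hmono ⟨hy.1, lt_trans hy.2 hx₁m.2⟩ hx₁m hy.2).le
      linarith
  -- D x₂ ≤ 0
  have h₂ : D x₂ ≤ 0 := by
    rcases eq_or_lt_of_le hb1 with hb | hb
    · -- b = 1
      have hx₂1 : x₂ < 1 := by rw [← hb]; exact hx₂m.2
      apply ge_of_tendsto hD1
      filter_upwards [self_mem_nhdsWithin,
        mem_nhdsWithin_of_mem_nhds (Ioi_mem_nhds hx₂1)] with y hy1 hy2
      exact (hmono hx₂m ⟨lt_trans hx₂m.1 hy2, by rw [hb]; exact hy1.2⟩ hy2).le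
    · -- b < 1
      have hbI : b ∈ Ioo (0:ℝ) 1 := ⟨lt_trans hρ₀.1 hρ₀b, hb⟩
      have hsb_le : s b ≤ 0 := by
        by_contra hbp
        push_neg at hbp
        have hev : ∀ᶠ y in 𝓝 b, 0 < s y :=
          (hscont b hbI).eventually_mem (isOpen_Ioi.mem_nhds hbp)
        obtain ⟨ε, hε, hball⟩ := Metric.eventually_nhds_iff.mp hev
        have hδ : 0 < min ε (1-b) := lt_min hε (by linarith)
        have hcontr : b + min ε (1-b) ≤ b := by
          apply le_csInf ⟨1, hB1⟩
          intro y hy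
          by_contra hyc
          push_neg at hyc
          have hyb : b ≤ y := hblow y hy
          have hy1 : y < 1 := by
            have := min_le_right ε (1-b); linarith
          have hsy : 0 < s y := by
            apply hball
            rw [Real.dist_eq, abs_lt]
            have := min_le_left ε (1-b)
            constructor <;> linarith
          rcases hy.2 with h | h
          · exact absurd h (ne_of_lt hy1)
          · linarith
        linarith
      have hsb_ge : 0 ≤ s b := by
        have htd : Filter.Tendsto s (𝓝[<] b) (𝓝 (s b)) :=
          Filter.Tendsto.mono_left (hscont b hbI) nhdsWithin_le_nhds
        apply ge_of_tendsto htd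
        filter_upwards [Ioo_mem_nhdsLT_of_mem (Set.mem_Ioc.mpr ⟨hρ₀b, le_rfl⟩)] with y hy
        exact (hspos_r y hy.1.le hy.2).le
      have hsb : s b = 0 := le_antisymm hsb_le hsb_ge
      have hsdb := hsD b hbI
      have hslope : -(cf l b * (u b / Gf b)) ≤ 0 := by
        have htd := (hasDerivAt_iff_tendsto_slope.mp hsdb).mono_left
          (nhdsWithin_mono b (fun y (hy : y ∈ Iio b) => ne_of_lt hy : Iio b ⊆ {b}ᶜ))
        apply le_of_tendsto htd
        filter_upwards [Ioo_mem_nhdsLT_of_mem (Set.mem_Ioc.mpr ⟨hρ₀b, le_rfl⟩)] with y hy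
        rw [slope_def_field, hsb, sub_zero]
        have h1 := hspos_r y hy.1.le hy.2
        have h2 : y - b < 0 := by linarith [hy.2]
        exact (div_neg_of_pos_of_neg h1 h2).le
      have hub : 0 ≤ u b := by
        have hc := hcpos hl0 hl1 hbI.1 hbI.2
        have hg := hGpos hbI.1
        by_contra hc2
        push_neg at hc2
        have : cf l b * (u b / Gf b) < 0 :=
          mul_neg_of_pos_of_neg hc (div_neg_of_neg_of_pos hc2 hg)
        linarith
      have hDb : D b ≤ 0 := by
        have hw := hwpos (l := l) hbI.1 hbI.2
        have hg := hGpos hbI.1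
        rw [hD_def]
        show -(u b * (b^3 * wf l b * Gf b)) - Af l b * sfn l u b ≤ 0
        rw [show sfn l u b = s b from rfl, hsb, mul_zero, sub_zero]
        have hb0 : (0:ℝ) < b := hbI.1
        have : 0 ≤ u b * (b^3 * wf l b * Gf b) :=
          mul_nonneg hub (mul_nonneg (mul_nonneg (pow_nonneg hb0.le 3) hw.le) hg.le)
        linarith
      have hDx₂b : D x₂ ≤ D b := by
        have htd : Filter.Tendsto D (𝓝[<] b) (𝓝 (D b)) :=
          Filter.Tendsto.mono_left ((hDD b hbI).continuousAt) nhdsWithin_le_nhds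
        apply ge_of_tendsto htd
        filter_upwards [Ioo_mem_nhdsLT_of_mem (Set.mem_Ioc.mpr ⟨hx₂m.2, le_rfl⟩)] with y hy
        exact (hmono hx₂m ⟨lt_trans hx₂m.1 hy.1, hy.2⟩ hy.1).le
      linarith
  linarith

end main
end ModeStab

open ModeStab in
theorem main_nonexistence (lam : ℝ) (hlam : lam ∈ Set.Ioo (0:ℝ) 1) :
    ¬ ∃ u : ℝ → ℝ, ContDiffOn ℝ 2 u (Set.Icc (0:ℝ) 1) ∧
      (∃ ρ ∈ Set.Icc (0:ℝ) 1, u ρ ≠ 0) ∧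
      (∀ ρ ∈ Set.Ioo (0:ℝ) 1,
        deriv (deriv u) ρ + (2 / ρ - 2 * lam * ρ / (1 - ρ^2)) * deriv u ρ
          - (2 * Real.cos (2 * f₀ ρ) / (ρ^2 * (1 - ρ^2))
              + lam * (1 + lam) / (1 - ρ^2)) * u ρ = 0) := by
  obtain ⟨hl0, hl1⟩ := hlam
  rintro ⟨u, hu, ⟨ρs, hρs, hune⟩, hode⟩
  by_cases hex : ∃ ρ₀ ∈ Ioo (0:ℝ) 1, sfn lam u ρ₀ ≠ 0
  · obtain ⟨ρ₀, hρ₀, hs0⟩ := hex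
    rcases hs0.lt_or_gt with hneg | hpos
    · -- apply no_pos to -u
      have hdneg : (deriv fun y => -u y) = fun y => -deriv u y := deriv.neg'
      have hode' : ∀ ρ ∈ Ioo (0:ℝ) 1,
          deriv (deriv (fun y => -u y)) ρ + (2 / ρ - 2 * lam * ρ / (1 - ρ^2)) * deriv (fun y => -u y) ρ
            - (2 * Real.cos (2 * f₀ ρ) / (ρ^2 * (1 - ρ^2))
                + lam * (1 + lam) / (1 - ρ^2)) * (fun y => -u y) ρ = 0 := by
        intro ρ hρ
        have h1 : deriv (deriv (fun y => -u y)) ρ = -(deriv (deriv u) ρ) := by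
          rw [hdneg]; exact deriv.neg
        have h2 : deriv (fun y => -u y) ρ = -(deriv u ρ) := deriv.neg
        rw [h1, h2]
        have := hode ρ hρ
        simp only
        ring_nf
        ring_nf at this
        linarith
      have hspos' : 0 < sfn lam (fun y => -u y) ρ₀ := by
        have : sfn lam (fun y => -u y) ρ₀ = -(sfn lam u ρ₀) := by
          simp only [sfn, hdneg]
          ring
        rw [this]; linarith
      exact no_pos hl0 hl1 hu.neg hode' hρ₀ hspos'
    · exact no_pos hl0 hl1 hu hode hρ₀ hpos
  · push_neg at hex
    have huz : ∀ ρ ∈ Ioo (0:ℝ) 1, u ρ = 0 := by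
      intro ρ hρ
      obtain ⟨h1, h2⟩ := u_facts hu hρ
      have hsd := hs_deriv hl0 hl1 hρ.1 hρ.2 u h1 h2 (hode ρ hρ)
      have hzero : HasDerivAt (sfn lam u) 0 ρ := by
        have hev : sfn lam u =ᶠ[nhds ρ] (fun _ => (0:ℝ)) := by
          filter_upwards [isOpen_Ioo.mem_nhds hρ] with y hy
          exact hex y hy
        exact (hasDerivAt_const ρ (0:ℝ)).congr_of_eventuallyEq hev
      have heq := hsd.unique hzero
      have hc := hcpos hl0 hl1 hρ.1 hρ.2
      have hg := hGpos hρ.1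
      have h3 : cf lam ρ * (u ρ / Gf ρ) = 0 := by linarith [neg_eq_zero.mp heq]
      rcases mul_eq_zero.mp h3 with h | h
      · exact absurd h hc.ne'
      · rcases div_eq_zero_iff.mp h with h' | h'
        · exact h'
        · exact absurd h' hg.ne'
    haveI hNB0 : (𝓝[Ioo (0:ℝ) 1] (0:ℝ)).NeBot := by
      apply mem_closure_iff_nhdsWithin_neBot.mp
      rw [closure_Ioo (by norm_num : (0:ℝ) ≠ 1)]
      exact ⟨le_rfl, zero_le_one⟩
    haveI hNB1 : (𝓝[Ioo (0:ℝ) 1] (1:ℝ)).NeBot := by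
      apply mem_closure_iff_nhdsWithin_neBot.mp
      rw [closure_Ioo (by norm_num : (0:ℝ) ≠ 1)]
      exact ⟨zero_le_one, le_rfl⟩
    have hzero_lim : ∀ z ∈ Icc (0:ℝ) 1, (𝓝[Ioo (0:ℝ) 1] z).NeBot → u z = 0 := by
      intro z hz hnb
      have htd : Filter.Tendsto u (𝓝[Ioo (0:ℝ) 1] z) (𝓝 (u z)) :=
        (hu.continuousOn z hz).mono Ioo_subset_Icc_self
      have htd0 : Filter.Tendsto u (𝓝[Ioo (0:ℝ) 1] z) (𝓝 0) := by
        apply Filter.Tendsto.congr' _ tendsto_const_nhds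
        filter_upwards [self_mem_nhdsWithin] with y hy
        exact (huz y hy).symm
      exact tendsto_nhds_unique htd htd0
    apply hune
    rcases eq_or_lt_of_le hρs.1 with h0 | h0
    · rw [← h0]; exact hzero_lim 0 ⟨le_rfl, zero_le_one⟩ hNB0
    · rcases eq_or_lt_of_le hρs.2 with h1 | h1
      · rw [h1]; exact hzero_lim 1 ⟨zero_le_one, le_rfl⟩ hNB1
      · exact huz ρs ⟨h0, h1⟩
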